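/- If ‖P_Ω P_T‖ ≤ √ρ + δ and ‖P_{Ω⊥} P_T‖ ≤ √(1−ρ) + δ with 0 < ρ < 1, √ρ + δ < 1, then the operator R = P_{T⊥} Σ_{k≥1} (P_Ω P_T P_Ω)^k satisfies ‖R‖ ≤ ((√(1−ρ)+δ)(√ρ+δ)) / (1 − (√ρ+δ)²). -/

import Mathlib

theorem opNorm_R_le_of_bounds
    {E : Type*} [NormedAddCommGroup E] [InnerProductSpace ℝ E]
    [FiniteDimensional ℝ E]
    (Ω T : Submodule ℝ E)
    (PΩ PT : E →L[ℝ] E)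
    (hPΩ : PΩ = Ω.subtypeL.comp Ω.orthogonalProjectionOnto)
    (hPT : PT = T.subtypeL.comp T.orthogonalProjectionOnto)
    (ρ δ : ℝ) (hρ : ρ ∈ Set.Ioo (0:ℝ) 1) (hδ : 0 < δ)
    (hlt : Real.sqrt ρ + δ < 1)
    (h1 : ‖PΩ.comp PT‖ ≤ Real.sqrt ρ + δ)
    (h2 : ‖(1 - PΩ).comp PT‖ ≤ Real.sqrt (1 - ρ) + δ)
    (R : E →L[ℝ] E)
    (hR : R = (1 - PT).comp (∑' k : ℕ, (PΩ.comp (PT.comp PΩ)) ^ (k + 1))) :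
    ‖R‖ ≤ ((Real.sqrt (1 - ρ) + δ) * (Real.sqrt ρ + δ)) /
      (1 - (Real.sqrt ρ + δ) ^ 2) := by
  set a := Real.sqrt ρ + δ with ha
  set b := Real.sqrt (1 - ρ) + δ with hb
  have ha0 : 0 < a := by positivity
  have hb0 : 0 < b := by positivity
  have ha2 : a ^ 2 < 1 := by
    calc a ^ 2 = a * a := sq a
    _ < 1 * 1 := by nlinarith
    _ = 1 := one_mul 1
  have ha2' : (0:ℝ) ≤ a ^ 2 := sq_nonneg a
  -- idempotency
  have hPT2 : PT * PT = PT := by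
    ext x
    simp [hPT, ContinuousLinearMap.mul_apply]
    exact DFunLike.congr_fun (Submodule.isIdempotentElem_starProjection (K := T)) x
  -- self-adjointness
  have hsaT : IsSelfAdjoint PT := hPT ▸ (isSelfAdjoint_starProjection T : IsSelfAdjoint (T.subtypeL.comp T.orthogonalProjectionOnto))
  have hsaΩ : IsSelfAdjoint PΩ := hPΩ ▸ (isSelfAdjoint_starProjection Ω : IsSelfAdjoint (Ω.subtypeL.comp Ω.orthogonalProjectionOnto))
  -- norms
  have hnorm_adj : ‖PT * PΩ‖ = ‖PΩ * PT‖ := by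
    have hadj : ContinuousLinearMap.adjoint (PΩ * PT) = PT * PΩ := by
      rw [ContinuousLinearMap.mul_def, ContinuousLinearMap.adjoint_comp,
        hsaT.adjoint_eq, hsaΩ.adjoint_eq, ContinuousLinearMap.mul_def]
    rw [← hadj]
    exact ContinuousLinearMap.adjoint.norm_map _
  have h1' : ‖PΩ * PT‖ ≤ a := h1
  have h1'' : ‖PT * PΩ‖ ≤ a := hnorm_adj ▸ h1'
  have h2' : ‖(1 - PΩ) * PT‖ ≤ b := h2
  have hn1T : ‖(1 : E →L[ℝ] E) - PT‖ ≤ 1 := by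
    refine ContinuousLinearMap.opNorm_le_bound _ zero_le_one fun x => ?_
    have : ((1 : E →L[ℝ] E) - PT) x = (Tᗮ.orthogonalProjectionOnto x : E) := by
      simp [hPT, ContinuousLinearMap.sub_apply]
    rw [this, one_mul]
    calc ‖(Tᗮ.orthogonalProjectionOnto x : E)‖ = ‖Tᗮ.orthogonalProjectionOnto x‖ := rfl
    _ ≤ ‖Tᗮ.orthogonalProjectionOnto‖ * ‖x‖ := (Tᗮ.orthogonalProjectionOnto).le_opNorm x
    _ ≤ 1 * ‖x‖ := by
        have := Submodule.orthogonalProjectionOnto_norm_le Tᗮ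
        exact mul_le_mul_of_nonneg_right this (norm_nonneg x)
    _ = ‖x‖ := one_mul _
  set A : E →L[ℝ] E := PΩ.comp (PT.comp PΩ) with hA
  have hAmul : A = PΩ * (PT * PΩ) := rfl
  have hAfac : A = (PΩ * PT) * (PT * PΩ) := by
    rw [hAmul]
    calc PΩ * (PT * PΩ) = PΩ * (PT * PT * PΩ) := by rw [hPT2]
    _ = (PΩ * PT) * (PT * PΩ) := by noncomm_ring
  have hAnorm : ‖A‖ ≤ a ^ 2 := by
    rw [hAfac, sq]
    calc ‖(PΩ * PT) * (PT * PΩ)‖ ≤ ‖PΩ * PT‖ * ‖PT * PΩ‖ := norm_mul_le _ _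
    _ ≤ a * a := mul_le_mul h1' h1'' (norm_nonneg _) ha0.le
  -- the key algebraic identity
  have h0 : ((1 : E →L[ℝ] E) - PT) * PT = 0 := by
    rw [sub_mul, one_mul, hPT2, sub_self]
  have step1 : ((1 : E →L[ℝ] E) - PT) * (PΩ * PT) = -((1 - PT) * ((1 - PΩ) * PT)) := by
    have : ((1 : E →L[ℝ] E) - PT) * ((1 - PΩ) * PT)
        = (1 - PT) * PT - (1 - PT) * (PΩ * PT) := by noncomm_ring
    rw [this, h0, zero_sub, neg_neg]
  have keyEq : ((1 : E →L[ℝ] E) - PT) * A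
      = -(((1 - PT) * ((1 - PΩ) * PT)) * (PT * PΩ)) := by
    rw [hAfac, ← mul_assoc, step1, neg_mul]
  have hkey : ‖((1 : E →L[ℝ] E) - PT) * A‖ ≤ b * a := by
    rw [keyEq, norm_neg]
    calc ‖((1 - PT) * ((1 - PΩ) * PT)) * (PT * PΩ)‖
        ≤ ‖(1 - PT) * ((1 - PΩ) * PT)‖ * ‖PT * PΩ‖ := norm_mul_le _ _
    _ ≤ (1 * b) * a := by
        refine mul_le_mul ?_ h1'' (norm_nonneg _) (by positivity)
        calc ‖((1:E →L[ℝ] E) - PT) * ((1 - PΩ) * PT)‖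
            ≤ ‖(1:E →L[ℝ] E) - PT‖ * ‖(1 - PΩ) * PT‖ := norm_mul_le _ _
        _ ≤ 1 * b := mul_le_mul hn1T h2' (norm_nonneg _) zero_le_one
    _ = b * a := by ring
  -- powers
  have hApow : ∀ k : ℕ, ‖A ^ k‖ ≤ (a ^ 2) ^ k := by
    intro k
    induction k with
    | zero => rw [pow_zero, pow_zero]; exact ContinuousLinearMap.norm_id_le
    | succ n ih =>
        rw [pow_succ, pow_succ]
        calc ‖A ^ n * A‖ ≤ ‖A ^ n‖ * ‖A‖ := norm_mul_le _ _
        _ ≤ (a ^ 2) ^ n * a ^ 2 := mul_le_mul ih hAnorm (norm_nonneg _) (by positivity)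
  have hterm : ∀ k : ℕ, ‖((1 : E →L[ℝ] E) - PT) * A ^ (k + 1)‖ ≤ (b * a) * (a ^ 2) ^ k := by
    intro k
    have : ((1 : E →L[ℝ] E) - PT) * A ^ (k + 1) = (((1:E →L[ℝ] E) - PT) * A) * A ^ k := by
      rw [pow_succ']; noncomm_ring
    rw [this]
    calc ‖(((1:E →L[ℝ] E) - PT) * A) * A ^ k‖
        ≤ ‖((1:E →L[ℝ] E) - PT) * A‖ * ‖A ^ k‖ := norm_mul_le _ _
    _ ≤ (b * a) * (a ^ 2) ^ k := mul_le_mul hkey (hApow k) (norm_nonneg _) (by positivity)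
  -- summability
  have hAlt : ‖A‖ < 1 := lt_of_le_of_lt hAnorm ha2
  have hsumA : Summable (fun k : ℕ => A ^ k) := summable_geometric_of_norm_lt_one hAlt
  have hsum : Summable (fun k : ℕ => A ^ (k + 1)) := by
    have := hsumA.mul_right A
    simpa [pow_succ] using this
  -- put it together
  have hRmul : R = ((1 : E →L[ℝ] E) - PT) * (∑' k : ℕ, A ^ (k + 1)) := hR
  have htsum : R = ∑' k : ℕ, ((1 : E →L[ℝ] E) - PT) * A ^ (k + 1) := by
    rw [hRmul, ← hsum.tsum_mul_left]
  rw [htsum]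
  have hgeo : HasSum (fun k : ℕ => (b * a) * (a ^ 2) ^ k) ((b * a) * (1 - a ^ 2)⁻¹) := by
    exact (hasSum_geometric_of_lt_one ha2' ha2).mul_left (b * a)
  have := tsum_of_norm_bounded hgeo hterm
  calc ‖∑' k : ℕ, ((1 : E →L[ℝ] E) - PT) * A ^ (k + 1)‖ ≤ (b * a) * (1 - a ^ 2)⁻¹ := this
  _ = b * a / (1 - a ^ 2) := (div_eq_mul_inv _ _).symm
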